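/- (Uniqueness of boundary complements) Let Σ be a monoidal signature, let i →a1 L ←a2 j and n →b1 G ←b2 m be monogamous cospans of Σ-labelled hypergraphs, and let f : L → G be an injective homomorphism. Then any two boundary complements of f along [a1,a2] are isomorphic: if (C, c : i+j → C, g : C → G, d : n+m → C) and (C', c', g', d') are boundary complements, there exists an isomorphism φ : C → C' with φ∘c = c' and g'∘φ = g. -/

import Mathlib

namespace SDRT

/-- A directed hypergraph: a set of nodes and, for each hyperedge, an ordered
list of source nodes and an ordered list of target nodes.  A `(k,l)`-hyperedge
is a hyperedge with `k` sources and `l` targets. -/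
structure Hyp : Type 1 where
  V : Type
  E : Type
  src : E → List V
  tgt : E → List V

namespace Hyp

/-- The set of pairs `(h, i)` such that `v` is the `i`-th target of the hyperedge `h`.
The in-degree of `v` is the number of such pairs. -/
def inPairs (G : Hyp) (v : G.V) : Set (G.E × ℕ) := {p | (G.tgt p.1)[p.2]? = some v}

/-- The set of pairs `(h, j)` such that `v` is the `j`-th source of the hyperedge `h`.
The out-degree of `v` is the number of such pairs. -/
def outPairs (G : Hyp) (v : G.V) : Set (G.E × ℕ) := {p | (G.src p.1)[p.2]? = some v}

/-- `v` has in-degree `0`. -/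
def inDegZero (G : Hyp) (v : G.V) : Prop := G.inPairs v = ∅

/-- `v` has in-degree `1`. -/
def inDegOne (G : Hyp) (v : G.V) : Prop := ∃! p, p ∈ G.inPairs v

/-- `v` has out-degree `0`. -/
def outDegZero (G : Hyp) (v : G.V) : Prop := G.outPairs v = ∅

/-- `v` has out-degree `1`. -/
def outDegOne (G : Hyp) (v : G.V) : Prop := ∃! p, p ∈ G.outPairs v

/-- `h'` is a successor of `h` if some node is both a target of `h` and a source of `h'`. -/
def Successor (G : Hyp) (h h' : G.E) : Prop := ∃ v, v ∈ G.tgt h ∧ v ∈ G.src h'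

/-- `l` is a path (nonempty sequence of hyperedges, each a successor of the previous)
from the node `v` to the node `v'`: `v` is among the sources of the first hyperedge
and `v'` among the targets of the last one. -/
def PathFrom (G : Hyp) (l : List G.E) (v v' : G.V) : Prop :=
  ∃ hne : l ≠ [], l.Chain' G.Successor ∧ v ∈ G.src (l.head hne) ∧ v' ∈ G.tgt (l.getLast hne)

/-- `l` is a path from the hyperedge `h` to the hyperedge `h'`. -/
def EdgePath (G : Hyp) (l : List G.E) (h h' : G.E) : Prop :=
  ∃ hne : l ≠ [], l.Chain' G.Successor ∧ l.head hne = h ∧ l.getLast hne = h'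

/-- A hypergraph is acyclic if there is no path from a node to itself. -/
def Acyclic (G : Hyp) : Prop := ∀ (v : G.V) (l : List G.E), ¬ G.PathFrom l v v

end Hyp

/-- A subhypergraph: a set of nodes and hyperedges closed under taking the sources
and targets of its hyperedges. -/
structure SubHyp (G : Hyp) where
  nodes : Set G.V
  edges : Set G.E
  src_mem : ∀ e ∈ edges, ∀ v ∈ G.src e, v ∈ nodes
  tgt_mem : ∀ e ∈ edges, ∀ v ∈ G.tgt e, v ∈ nodes

/-- A subhypergraph `H` of `G` is convex if every path in `G` between nodes of `H`
consists only of hyperedges of `H`. -/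
def SubHyp.Convex {G : Hyp} (H : SubHyp G) : Prop :=
  ∀ v ∈ H.nodes, ∀ v' ∈ H.nodes, ∀ l, G.PathFrom l v v' → ∀ e ∈ l, e ∈ H.edges

/-- The hypergraph underlying a subhypergraph. -/
def SubHyp.toHyp {G : Hyp} (H : SubHyp G) : Hyp where
  V := H.nodes
  E := H.edges
  src := fun e => (G.src e.1).pmap (fun v hv => (⟨v, hv⟩ : H.nodes))
    (fun v hv => H.src_mem e.1 e.2 v hv)
  tgt := fun e => (G.tgt e.1).pmap (fun v hv => (⟨v, hv⟩ : H.nodes))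
    (fun v hv => H.tgt_mem e.1 e.2 v hv)

/-- A cospan of hypergraphs with discrete interfaces `m → G ← n`. -/
structure Cospan (m n : Type) : Type 1 where
  G : Hyp
  inp : m → G.V
  out : n → G.V

namespace Cospan

/-- A cospan is monogamous if both legs are injective, nodes in the image of the
input leg have in-degree 0, all other nodes have in-degree 1, nodes in the image
of the output leg have out-degree 0, and all other nodes have out-degree 1. -/
def Monogamous {m n : Type} (A : Cospan m n) : Prop :=
  Function.Injective A.inp ∧ Function.Injective A.out ∧
  (∀ v ∈ Set.range A.inp, A.G.inDegZero v) ∧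
  (∀ v ∉ Set.range A.inp, A.G.inDegOne v) ∧
  (∀ v ∈ Set.range A.out, A.G.outDegZero v) ∧
  (∀ v ∉ Set.range A.out, A.G.outDegOne v)

/-- A cospan is acyclic if its carrier is. -/
def Acyclic {m n : Type} (A : Cospan m n) : Prop := A.G.Acyclic

/-- Composition of cospans by pushout: glue `G` and `H` along the common
interface `n`, identifying `A.out k` with `B.inp k` for every `k : n`. -/
def comp {m n p : Type} (A : Cospan m n) (B : Cospan n p) : Cospan m p where
  G := { V := Quot (fun x y : A.G.V ⊕ B.G.V =>
                      ∃ k : n, x = Sum.inl (A.out k) ∧ y = Sum.inr (B.inp k))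
         E := A.G.E ⊕ B.G.E
         src := Sum.elim (fun e => (A.G.src e).map (fun v => Quot.mk _ (Sum.inl v)))
                         (fun e => (B.G.src e).map (fun v => Quot.mk _ (Sum.inr v)))
         tgt := Sum.elim (fun e => (A.G.tgt e).map (fun v => Quot.mk _ (Sum.inl v)))
                         (fun e => (B.G.tgt e).map (fun v => Quot.mk _ (Sum.inr v))) }
  inp := fun x => Quot.mk _ (Sum.inl (A.inp x))
  out := fun y => Quot.mk _ (Sum.inr (B.out y))

/-- Monoidal product (tensor) of cospans: disjoint union of the carriers, with
the evident interface maps. -/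
def tensor {m₁ n₁ m₂ n₂ : Type} (A : Cospan m₁ n₁) (B : Cospan m₂ n₂) :
    Cospan (m₁ ⊕ m₂) (n₁ ⊕ n₂) where
  G := { V := A.G.V ⊕ B.G.V
         E := A.G.E ⊕ B.G.E
         src := Sum.elim (fun e => (A.G.src e).map Sum.inl) (fun e => (B.G.src e).map Sum.inr)
         tgt := Sum.elim (fun e => (A.G.tgt e).map Sum.inl) (fun e => (B.G.tgt e).map Sum.inr) }
  inp := Sum.elim (fun x => Sum.inl (A.inp x)) (fun x => Sum.inr (B.inp x))
  out := Sum.elim (fun y => Sum.inl (A.out y)) (fun y => Sum.inr (B.out y))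

/-- The identity cospan on `k`: the discrete hypergraph on `k` with identity legs. -/
def idCospan (k : Type) : Cospan k k where
  G := { V := k, E := Empty, src := Empty.elim, tgt := Empty.elim }
  inp := id
  out := id

end Cospan

/-- An isomorphism of cospans: a hypergraph isomorphism of the carriers commuting
with the interface legs. -/
structure CospanIso {m n : Type} (A B : Cospan m n) where
  nodeEquiv : A.G.V ≃ B.G.V
  edgeEquiv : A.G.E ≃ B.G.E
  src_eq : ∀ e, B.G.src (edgeEquiv e) = (A.G.src e).map nodeEquiv
  tgt_eq : ∀ e, B.G.tgt (edgeEquiv e) = (A.G.tgt e).map nodeEquiv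
  inp_eq : ∀ x, nodeEquiv (A.inp x) = B.inp x
  out_eq : ∀ y, nodeEquiv (A.out y) = B.out y

/-- Two cospans are isomorphic if there is an isomorphism between them. -/
def Cospan.Isomorphic {m n : Type} (A B : Cospan m n) : Prop := Nonempty (CospanIso A B)

/-- A homomorphism of hypergraphs: maps nodes to nodes and hyperedges to
hyperedges, preserving the ordered lists of sources and targets. -/
structure HypHom (G H : Hyp) where
  nodeMap : G.V → H.V
  edgeMap : G.E → H.E
  src_eq : ∀ e, H.src (edgeMap e) = (G.src e).map nodeMap
  tgt_eq : ∀ e, H.tgt (edgeMap e) = (G.tgt e).map nodeMap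

/-- The image of a hypergraph homomorphism, as a subhypergraph of the codomain. -/
def HypHom.image {G H : Hyp} (f : HypHom G H) : SubHyp H where
  nodes := Set.range f.nodeMap
  edges := Set.range f.edgeMap
  src_mem := by
    rintro e ⟨e', rfl⟩ v hv
    rw [f.src_eq] at hv
    rcases List.mem_map.mp hv with ⟨w, -, rfl⟩
    exact ⟨w, rfl⟩
  tgt_mem := by
    rintro e ⟨e', rfl⟩ v hv
    rw [f.tgt_eq] at hv
    rcases List.mem_map.mp hv with ⟨w, -, rfl⟩
    exact ⟨w, rfl⟩


/-! ### Labelled hypergraphs -/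

/-- A monoidal signature: a set of operation symbols, each with an arity and a
coarity. -/
structure MonSig : Type 1 where
  ops : Type
  ar : ops → ℕ
  coar : ops → ℕ

/-- A `Σ`-labelled hypergraph: each hyperedge carries a label whose arity and
coarity match the numbers of sources and targets of the hyperedge. -/
structure LHyp (S : MonSig) extends Hyp where
  label : E → S.ops
  src_len : ∀ e, (src e).length = S.ar (label e)
  tgt_len : ∀ e, (tgt e).length = S.coar (label e)

/-- A homomorphism of `Σ`-labelled hypergraphs. -/
structure LHom {S : MonSig} (G H : LHyp S) where
  nodeMap : G.V → H.V
  edgeMap : G.E → H.E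
  src_eq : ∀ e, H.src (edgeMap e) = (G.src e).map nodeMap
  tgt_eq : ∀ e, H.tgt (edgeMap e) = (G.tgt e).map nodeMap
  label_eq : ∀ e, H.label (edgeMap e) = G.label e

/-- Composition (diagrammatic order) of homomorphisms. -/
def LHom.comp {S : MonSig} {G H K : LHyp S} (f : LHom G H) (g : LHom H K) : LHom G K where
  nodeMap := g.nodeMap ∘ f.nodeMap
  edgeMap := g.edgeMap ∘ f.edgeMap
  src_eq := by intro e; simp only [Function.comp_apply, g.src_eq, f.src_eq, List.map_map]
  tgt_eq := by intro e; simp only [Function.comp_apply, g.tgt_eq, f.tgt_eq, List.map_map]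
  label_eq := by intro e; simp only [Function.comp_apply, g.label_eq, f.label_eq]

/-- The underlying homomorphism of unlabelled hypergraphs. -/
def LHom.toHypHom {S : MonSig} {G H : LHyp S} (f : LHom G H) : HypHom G.toHyp H.toHyp :=
  ⟨f.nodeMap, f.edgeMap, f.src_eq, f.tgt_eq⟩

/-- The discrete `Σ`-labelled hypergraph on a set `I` of nodes (no hyperedges). -/
def discreteLHyp (S : MonSig) (I : Type) : LHyp S where
  V := I
  E := Empty
  src := Empty.elim
  tgt := Empty.elim
  label := fun e => e.elim
  src_len := fun e => e.elim
  tgt_len := fun e => e.elim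

/-- A homomorphism out of a discrete hypergraph is just a function on nodes. -/
def discreteHom {S : MonSig} {I : Type} (C : LHyp S) (c : I → C.V) :
    LHom (discreteLHyp S I) C where
  nodeMap := c
  edgeMap := Empty.elim
  src_eq := fun e => e.elim
  tgt_eq := fun e => e.elim
  label_eq := fun e => e.elim

/-- The square `f ; inA = g ; inB` is a pushout of `Σ`-labelled hypergraphs. -/
def IsPushout {S : MonSig} {X A B P : LHyp S} (f : LHom X A) (g : LHom X B)
    (inA : LHom A P) (inB : LHom B P) : Prop :=
  f.comp inA = g.comp inB ∧
  ∀ (W : LHyp S) (u : LHom A W) (w : LHom B W), f.comp u = g.comp w →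
    ∃! t : LHom P W, inA.comp t = u ∧ inB.comp t = w

/-- A cospan of `Σ`-labelled hypergraphs with discrete interfaces. -/
structure LCospan (S : MonSig) (m n : Type) : Type 1 where
  G : LHyp S
  inp : m → G.V
  out : n → G.V

namespace LCospan

/-- The underlying unlabelled cospan. -/
def toCospan {S : MonSig} {m n : Type} (A : LCospan S m n) : Cospan m n :=
  ⟨A.G.toHyp, A.inp, A.out⟩

def Monogamous {S : MonSig} {m n : Type} (A : LCospan S m n) : Prop := A.toCospan.Monogamous

def Acyclic {S : MonSig} {m n : Type} (A : LCospan S m n) : Prop := A.G.toHyp.Acyclic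

/-- Composition of labelled cospans by pushout (gluing along the common interface). -/
def comp {S : MonSig} {m n p : Type} (A : LCospan S m n) (B : LCospan S n p) :
    LCospan S m p where
  G := { V := Quot (fun x y : A.G.V ⊕ B.G.V =>
                      ∃ k : n, x = Sum.inl (A.out k) ∧ y = Sum.inr (B.inp k))
         E := A.G.E ⊕ B.G.E
         src := Sum.elim (fun e => (A.G.src e).map (fun v => Quot.mk _ (Sum.inl v)))
                         (fun e => (B.G.src e).map (fun v => Quot.mk _ (Sum.inr v)))
         tgt := Sum.elim (fun e => (A.G.tgt e).map (fun v => Quot.mk _ (Sum.inl v)))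
                         (fun e => (B.G.tgt e).map (fun v => Quot.mk _ (Sum.inr v)))
         label := Sum.elim A.G.label B.G.label
         src_len := by rintro (e | e) <;> simp [A.G.src_len, B.G.src_len]
         tgt_len := by rintro (e | e) <;> simp [A.G.tgt_len, B.G.tgt_len] }
  inp := fun x => Quot.mk _ (Sum.inl (A.inp x))
  out := fun y => Quot.mk _ (Sum.inr (B.out y))

/-- Monoidal product (disjoint union) of labelled cospans. -/
def tensor {S : MonSig} {m₁ n₁ m₂ n₂ : Type} (A : LCospan S m₁ n₁) (B : LCospan S m₂ n₂) :
    LCospan S (m₁ ⊕ m₂) (n₁ ⊕ n₂) where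
  G := { V := A.G.V ⊕ B.G.V
         E := A.G.E ⊕ B.G.E
         src := Sum.elim (fun e => (A.G.src e).map Sum.inl) (fun e => (B.G.src e).map Sum.inr)
         tgt := Sum.elim (fun e => (A.G.tgt e).map Sum.inl) (fun e => (B.G.tgt e).map Sum.inr)
         label := Sum.elim A.G.label B.G.label
         src_len := by rintro (e | e) <;> simp [A.G.src_len, B.G.src_len]
         tgt_len := by rintro (e | e) <;> simp [A.G.tgt_len, B.G.tgt_len] }
  inp := Sum.elim (fun x => Sum.inl (A.inp x)) (fun x => Sum.inr (B.inp x))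
  out := Sum.elim (fun y => Sum.inl (A.out y)) (fun y => Sum.inr (B.out y))

/-- Reindexing of the interfaces of a cospan along functions. -/
def reind {S : MonSig} {m n m' n' : Type} (A : LCospan S m n) (f : m' → m) (g : n' → n) :
    LCospan S m' n' :=
  ⟨A.G, A.inp ∘ f, A.out ∘ g⟩

end LCospan

/-- An isomorphism of labelled cospans. -/
structure LCospanIso {S : MonSig} {m n : Type} (A B : LCospan S m n) where
  nodeEquiv : A.G.V ≃ B.G.V
  edgeEquiv : A.G.E ≃ B.G.E
  src_eq : ∀ e, B.G.src (edgeEquiv e) = (A.G.src e).map nodeEquiv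
  tgt_eq : ∀ e, B.G.tgt (edgeEquiv e) = (A.G.tgt e).map nodeEquiv
  label_eq : ∀ e, B.G.label (edgeEquiv e) = A.G.label e
  inp_eq : ∀ x, nodeEquiv (A.inp x) = B.inp x
  out_eq : ∀ y, nodeEquiv (A.out y) = B.out y

/-- `A` is a monogamous acyclic cospan. -/
def MonAcyclic {S : MonSig} {m n : Type} (A : LCospan S m n) : Prop :=
  A.Monogamous ∧ A.Acyclic

/-- `(C, c, g)` is a pushout complement of the mono `f : L → G` along the
interface `i + j → L` of the rule. -/
def IsPushoutComplement {S : MonSig} {i j n m : Type} (L : LCospan S i j) (Gc : LCospan S n m)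
    (f : LHom L.G Gc.G) (C : LHyp S) (c : i ⊕ j → C.V) (g : LHom C Gc.G) : Prop :=
  IsPushout (discreteHom L.G (Sum.elim L.inp L.out)) (discreteHom C c) f g

/-- `(C, c, g)` is a boundary complement: a pushout complement in which `c` is mono
and there are `d₁ : n → C`, `d₂ : m → C` commuting with the interface of `G` such
that the cospan `j + n → C ← m + i` is monogamous. -/
def IsBoundaryComplement {S : MonSig} {i j n m : Type} (L : LCospan S i j) (Gc : LCospan S n m)
    (f : LHom L.G Gc.G) (C : LHyp S) (c : i ⊕ j → C.V) (g : LHom C Gc.G) : Prop :=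
  IsPushoutComplement L Gc f C c g ∧ Function.Injective c ∧
  ∃ (d₁ : n → C.V) (d₂ : m → C.V),
    (∀ x, g.nodeMap (d₁ x) = Gc.inp x) ∧ (∀ y, g.nodeMap (d₂ y) = Gc.out y) ∧
    (LCospan.mk C (Sum.elim (fun y : j => c (Sum.inr y)) d₁)
                  (Sum.elim d₂ (fun x : i => c (Sum.inl x)))).Monogamous

/-- A convex DPO rewriting step from `D ← n+m` to `E ← n+m` using the rule
`L ← i+j → R`: a mono matching `f : L → D` with convex image, and a boundary
(pushout) complement `C` such that pasting `R` back along `i+j` yields `E`,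
with all interfaces preserved. -/
def ConvexStep {S : MonSig} {i j n m : Type} (Lr Rr : LCospan S i j)
    (D E : LCospan S n m) : Prop :=
  ∃ (f : LHom Lr.G D.G) (C : LHyp S) (c : i ⊕ j → C.V) (q : n ⊕ m → C.V)
    (g : LHom C D.G) (r : LHom Rr.G E.G) (h : LHom C E.G),
    Function.Injective f.nodeMap ∧ Function.Injective f.edgeMap ∧
    f.toHypHom.image.Convex ∧
    IsPushout (discreteHom Lr.G (Sum.elim Lr.inp Lr.out)) (discreteHom C c) f g ∧
    IsPushout (discreteHom Rr.G (Sum.elim Rr.inp Rr.out)) (discreteHom C c) r h ∧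
    (∀ x, g.nodeMap (q (Sum.inl x)) = D.inp x) ∧
    (∀ y, g.nodeMap (q (Sum.inr y)) = D.out y) ∧
    (∀ x, h.nodeMap (q (Sum.inl x)) = E.inp x) ∧
    (∀ y, h.nodeMap (q (Sum.inr y)) = E.out y) ∧
    Function.Injective c ∧
    (LCospan.mk C (Sum.elim (fun y : j => c (Sum.inr y)) (fun x : n => q (Sum.inl x)))
                  (Sum.elim (fun y : m => q (Sum.inr y)) (fun x : i => c (Sum.inl x)))).Monogamous

section Aux

variable {S : MonSig}

lemma LHom.ext' {G H : LHyp S} {f₁ f₂ : LHom G H}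
    (hn : f₁.nodeMap = f₂.nodeMap) (he : f₁.edgeMap = f₂.edgeMap) : f₁ = f₂ := by
  cases f₁; cases f₂; simp_all

/-- The identity homomorphism. -/
def LHom.idh (G : LHyp S) : LHom G G :=
  ⟨id, id, fun e => by simp, fun e => by simp, fun e => rfl⟩

lemma Hyp.not_src_getElem_of_outDegZero {G : Hyp} {v : G.V} (h : G.outDegZero v)
    (e : G.E) (p : ℕ) : (G.src e)[p]? ≠ some v := fun hp =>
  Set.eq_empty_iff_forall_notMem.mp h (e, p) hp

lemma Hyp.not_tgt_getElem_of_inDegZero {G : Hyp} {v : G.V} (h : G.inDegZero v)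
    (e : G.E) (p : ℕ) : (G.tgt e)[p]? ≠ some v := fun hp =>
  Set.eq_empty_iff_forall_notMem.mp h (e, p) hp

/-- Structural properties of a pushout complement along a discrete interface,
extracted from the universal property by comparison with the explicit pushout. -/
lemma pushout_complement_props {I : Type} {Lg C G : LHyp S}
    (a : I → Lg.V) (c : I → C.V) (hc : Function.Injective c)
    (f : LHom Lg G) (g : LHom C G)
    (hPO : IsPushout (discreteHom Lg a) (discreteHom C c) f g) :
    (∀ k, f.nodeMap (a k) = g.nodeMap (c k)) ∧
    Function.Injective g.edgeMap ∧
    (∀ e e', f.edgeMap e ≠ g.edgeMap e') ∧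
    (∀ E, (∃ e, f.edgeMap e = E) ∨ (∃ e, g.edgeMap e = E)) ∧
    (∀ V, (∃ x, f.nodeMap x = V) ∨ (∃ v, g.nodeMap v = V)) ∧
    (∀ v x, g.nodeMap v = f.nodeMap x → ∃ k, v = c k ∧ x = a k) ∧
    (∀ v w, g.nodeMap v = g.nodeMap w → v = w ∨ ∃ k k', v = c k ∧ w = c k' ∧ a k = a k') := by
  classical
  have hfa : ∀ k, f.nodeMap (a k) = g.nodeMap (c k) := fun k =>
    congrFun (congrArg LHom.nodeMap hPO.1) k
  -- the explicit pushout
  set r : Lg.V ⊕ C.V → Lg.V ⊕ C.V → Prop :=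
    fun x y => ∃ k, x = Sum.inl (a k) ∧ y = Sum.inr (c k) with hr
  set P : LHyp S :=
  { V := Quot r
    E := Lg.E ⊕ C.E
    src := Sum.elim (fun e => (Lg.src e).map (fun v => Quot.mk r (.inl v)))
                    (fun e => (C.src e).map (fun v => Quot.mk r (.inr v)))
    tgt := Sum.elim (fun e => (Lg.tgt e).map (fun v => Quot.mk r (.inl v)))
                    (fun e => (C.tgt e).map (fun v => Quot.mk r (.inr v)))
    label := Sum.elim Lg.label C.label
    src_len := by rintro (e | e) <;> simp [Lg.src_len, C.src_len]
    tgt_len := by rintro (e | e) <;> simp [Lg.tgt_len, C.tgt_len] } with hP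
  set ιL : LHom Lg P :=
    ⟨fun v => Quot.mk r (.inl v), Sum.inl, fun e => rfl, fun e => rfl, fun e => rfl⟩ with hιL
  set ιC : LHom C P :=
    ⟨fun v => Quot.mk r (.inr v), Sum.inr, fun e => rfl, fun e => rfl, fun e => rfl⟩ with hιC
  have comm : (discreteHom Lg a).comp ιL = (discreteHom C c).comp ιC := by
    apply LHom.ext'
    · funext k; exact Quot.sound ⟨k, rfl, rfl⟩
    · funext e; exact e.elim
  obtain ⟨t, ⟨ht1, ht2⟩, -⟩ := hPO.2 P ιL ιC comm
  -- the comparison map back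
  set s : LHom P G :=
  { nodeMap := Quot.lift (Sum.elim f.nodeMap g.nodeMap)
      (by rintro x y ⟨k, rfl, rfl⟩; exact hfa k)
    edgeMap := Sum.elim f.edgeMap g.edgeMap
    src_eq := by
      rintro (e | e) <;>
        simp only [P, Sum.elim_inl, Sum.elim_inr, f.src_eq, g.src_eq, List.map_map] <;> rfl
    tgt_eq := by
      rintro (e | e) <;>
        simp only [P, Sum.elim_inl, Sum.elim_inr, f.tgt_eq, g.tgt_eq, List.map_map] <;> rfl
    label_eq := by
      rintro (e | e) <;> simp only [P, Sum.elim_inl, Sum.elim_inr, f.label_eq, g.label_eq] } with hs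
  obtain ⟨u, -, huniq⟩ := hPO.2 G f g hPO.1
  have hls : ιL.comp s = f := LHom.ext' rfl rfl
  have hcs : ιC.comp s = g := LHom.ext' rfl rfl
  have hts : t.comp s = LHom.idh G := by
    have h1 : t.comp s = u := by
      apply huniq
      constructor
      · show (f.comp t).comp s = f
        rw [ht1, hls]
      · show (g.comp t).comp s = g
        rw [ht2, hcs]
    have h2 : LHom.idh G = u := by
      apply huniq
      exact ⟨LHom.ext' rfl rfl, LHom.ext' rfl rfl⟩
    rw [h1, ← h2]
  have hstV : ∀ V, s.nodeMap (t.nodeMap V) = V := fun V =>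
    congrFun (congrArg LHom.nodeMap hts) V
  have hstE : ∀ E, s.edgeMap (t.edgeMap E) = E := fun E =>
    congrFun (congrArg LHom.edgeMap hts) E
  have htf : ∀ x, t.nodeMap (f.nodeMap x) = Quot.mk r (.inl x) := fun x =>
    congrFun (congrArg LHom.nodeMap ht1) x
  have htg : ∀ v, t.nodeMap (g.nodeMap v) = Quot.mk r (.inr v) := fun v =>
    congrFun (congrArg LHom.nodeMap ht2) v
  have htfE : ∀ e, t.edgeMap (f.edgeMap e) = Sum.inl e := fun e =>
    congrFun (congrArg LHom.edgeMap ht1) e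
  have htgE : ∀ e, t.edgeMap (g.edgeMap e) = Sum.inr e := fun e =>
    congrFun (congrArg LHom.edgeMap ht2) e
  -- normal forms for the quotient
  set norm : Lg.V ⊕ C.V → Lg.V ⊕ C.V :=
    Sum.elim Sum.inl
      (fun v => if h : ∃ k, c k = v then Sum.inl (a h.choose) else Sum.inr v) with hnormdef
  have hnorm : ∀ x y, r x y → norm x = norm y := by
    rintro x y ⟨k, rfl, rfl⟩
    have hex : ∃ k', c k' = c k := ⟨k, rfl⟩
    have : hex.choose = k := hc hex.choose_spec
    simp only [hnormdef, Sum.elim_inl, Sum.elim_inr, dif_pos hex, this]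
  have key : ∀ x y, Quot.mk r x = Quot.mk r y → norm x = norm y := by
    intro x y hxy
    have := congrArg (Quot.lift norm hnorm) hxy
    simpa using this
  refine ⟨hfa, ?_, ?_, ?_, ?_, ?_, ?_⟩
  · intro e₁ e₂ h12
    have := (htgE e₁).symm.trans ((congrArg t.edgeMap h12).trans (htgE e₂))
    exact Sum.inr.inj this
  · intro e e' he
    have := (htfE e).symm.trans ((congrArg t.edgeMap he).trans (htgE e'))
    simp at this
  · intro E
    have hE := hstE E
    rcases htE : t.edgeMap E with e | e
    · rw [htE] at hE; exact Or.inl ⟨e, hE⟩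
    · rw [htE] at hE; exact Or.inr ⟨e, hE⟩
  · intro V
    have hV := hstV V
    obtain ⟨x, hx⟩ := Quot.exists_rep (t.nodeMap V)
    rw [← hx] at hV
    rcases x with x | v
    · exact Or.inl ⟨x, hV⟩
    · exact Or.inr ⟨v, hV⟩
  · intro v x hgf
    have hq : Quot.mk r (Sum.inr v) = Quot.mk r (Sum.inl x) := by
      rw [← htg v, ← htf x, hgf]
    have hn := key _ _ hq
    simp only [hnormdef, Sum.elim_inl, Sum.elim_inr] at hn
    by_cases hex : ∃ k, c k = v
    · rw [dif_pos hex] at hn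
      exact ⟨hex.choose, hex.choose_spec.symm, (Sum.inl.inj hn).symm⟩
    · rw [dif_neg hex] at hn
      exact absurd hn (by simp)
  · intro v w hgg
    have hq : Quot.mk r (Sum.inr v) = Quot.mk r (Sum.inr w) := by
      rw [← htg v, ← htg w, hgg]
    have hn := key _ _ hq
    simp only [hnormdef, Sum.elim_inl, Sum.elim_inr] at hn
    by_cases hv : ∃ k, c k = v <;> by_cases hw : ∃ k, c k = w
    · rw [dif_pos hv, dif_pos hw] at hn
      exact Or.inr ⟨hv.choose, hw.choose, hv.choose_spec.symm, hw.choose_spec.symm,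
        Sum.inl.inj hn⟩
    · rw [dif_pos hv, dif_neg hw] at hn
      exact absurd hn (by simp)
    · rw [dif_neg hv, dif_pos hw] at hn
      exact absurd hn (by simp)
    · rw [dif_neg hv, dif_neg hw] at hn
      exact Or.inl (Sum.inr.inj hn)

end Aux

/-- **Uniqueness of boundary complements.** Let `i → L ← j` and
`n → G ← m` be monogamous cospans of `Σ`-labelled hypergraphs and `f : L → G` an
injective homomorphism.  Any two boundary complements of `f` along `[a₁,a₂]` are
isomorphic, via an isomorphism `φ` with `φ ∘ c = c'` and `g' ∘ φ = g`. -/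
theorem boundary_complement_unique {S : MonSig} {i j n m : Type}
    [Finite i] [Finite j] [Finite n] [Finite m]
    (L : LCospan S i j) (Gc : LCospan S n m)
    (hL : L.Monogamous) (hG : Gc.Monogamous)
    (f : LHom L.G Gc.G)
    (hfn : Function.Injective f.nodeMap) (hfe : Function.Injective f.edgeMap)
    (C C' : LHyp S) (c : i ⊕ j → C.V) (c' : i ⊕ j → C'.V)
    (g : LHom C Gc.G) (g' : LHom C' Gc.G)
    (h : IsBoundaryComplement L Gc f C c g) (h' : IsBoundaryComplement L Gc f C' c' g') :
    ∃ φ : LHom C C',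
      Function.Bijective φ.nodeMap ∧ Function.Bijective φ.edgeMap ∧
      (∀ x, φ.nodeMap (c x) = c' x) ∧ φ.comp g' = g := by
  classical
  obtain ⟨hpo, hcinj, d₁, d₂, hd₁, hd₂, hmono⟩ := h
  obtain ⟨hpo', hcinj', d₁', d₂', hd₁', hd₂', hmono'⟩ := h'
  set a : i ⊕ j → L.G.V := Sum.elim L.inp L.out with ha
  obtain ⟨hfa, hgE, hdisjE, hEsurj, hVsurj, hD, hC⟩ :=
    pushout_complement_props a c hcinj f g hpo
  obtain ⟨hfa', hgE', hdisjE', hEsurj', hVsurj', hD', hC'⟩ :=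
    pushout_complement_props a c' hcinj' f g' hpo'
  -- degree facts from the boundary monogamous cospans
  have houtC : ∀ x : i, C.toHyp.outDegZero (c (Sum.inl x)) := fun x =>
    hmono.2.2.2.2.1 _ ⟨Sum.inr x, rfl⟩
  have hinC : ∀ y : j, C.toHyp.inDegZero (c (Sum.inr y)) := fun y =>
    hmono.2.2.1 _ ⟨Sum.inl y, rfl⟩
  have houtC' : ∀ x : i, C'.toHyp.outDegZero (c' (Sum.inl x)) := fun x =>
    hmono'.2.2.2.2.1 _ ⟨Sum.inr x, rfl⟩
  have hinC' : ∀ y : j, C'.toHyp.inDegZero (c' (Sum.inr y)) := fun y =>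
    hmono'.2.2.1 _ ⟨Sum.inl y, rfl⟩
  -- injectivity disjunction for the interface of L
  have haa : ∀ k k' : i ⊕ j, a k = a k' → k ≠ k' →
      (∃ x y, k = Sum.inl x ∧ k' = Sum.inr y) ∨ (∃ x y, k = Sum.inr y ∧ k' = Sum.inl x) := by
    rintro (x | y) (x' | y') hk hne
    · exact absurd (congrArg Sum.inl (hL.1 hk)) hne
    · exact Or.inl ⟨x, y', rfl, rfl⟩
    · exact Or.inr ⟨x', y, rfl, rfl⟩
    · exact absurd (congrArg Sum.inr (hL.2.1 hk)) hne
  -- definition of the node map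
  have hex' : ∀ v : C.V, ¬(∃ z, c z = v) →
      ∃ v', g'.nodeMap v' = g.nodeMap v ∧ ¬∃ z, c' z = v' := by
    intro v hv
    rcases hVsurj' (g.nodeMap v) with ⟨x, hx⟩ | ⟨v', hv'⟩
    · rcases hD v x hx.symm with ⟨k, hk1, -⟩
      exact absurd ⟨k, hk1.symm⟩ hv
    · refine ⟨v', hv', ?_⟩
      rintro ⟨z, rfl⟩
      have hgf : g.nodeMap v = f.nodeMap (a z) := by rw [← hv', ← hfa' z]
      rcases hD v (a z) hgf with ⟨k, hk1, -⟩
      exact hv ⟨k, hk1.symm⟩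
  set φn : C.V → C'.V := fun v =>
    if hv : ∃ z, c z = v then c' hv.choose else (hex' v hv).choose with hφn
  have hφc : ∀ z, φn (c z) = c' z := by
    intro z
    have hz : ∃ z', c z' = c z := ⟨z, rfl⟩
    simp only [hφn, dif_pos hz]
    exact congrArg c' (hcinj hz.choose_spec)
  have hφg : ∀ v, g'.nodeMap (φn v) = g.nodeMap v := by
    intro v
    by_cases hv : ∃ z, c z = v
    · simp only [hφn, dif_pos hv]
      rw [← hfa' hv.choose, hfa hv.choose, hv.choose_spec]
    · simp only [hφn, dif_neg hv]
      exact (hex' v hv).choose_spec.1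
  have hφnot : ∀ v, ¬(∃ z, c z = v) → ¬∃ z, c' z = φn v := by
    intro v hv
    simp only [hφn, dif_neg hv]
    exact (hex' v hv).choose_spec.2
  -- definition of the edge map
  have hexE : ∀ e : C.E, ∃ e', g'.edgeMap e' = g.edgeMap e := by
    intro e
    rcases hEsurj' (g.edgeMap e) with ⟨e₀, he₀⟩ | hE
    · exact absurd he₀ (hdisjE e₀ e)
    · exact hE
  set φE : C.E → C'.E := fun e => (hexE e).choose with hφE
  have hφEg : ∀ e, g'.edgeMap (φE e) = g.edgeMap e := fun e => (hexE e).choose_spec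
  -- pointwise source/target compatibility
  have hkey : ∀ (v : C.V) (u' : C'.V), g'.nodeMap u' = g'.nodeMap (φn v) →
      u' = φn v ∨
      ∃ k k', u' = c' k ∧ φn v = c' k' ∧ a k = a k' ∧ k ≠ k' := by
    intro v u' hgu
    rcases hC' u' (φn v) hgu with heq | ⟨k, k', hk, hk', hakk⟩
    · exact Or.inl heq
    · by_cases hkk : k = k'
      · subst hkk; exact Or.inl (hk.trans hk'.symm)
      · exact Or.inr ⟨k, k', hk, hk', hakk, hkk⟩
  have hsrc : ∀ e, C'.src (φE e) = (C.src e).map φn := by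
    intro e
    have hmaps : (C'.src (φE e)).map g'.nodeMap = ((C.src e).map φn).map g'.nodeMap := by
      rw [← g'.src_eq, hφEg, g.src_eq, List.map_map]
      exact List.map_congr_left (fun v _ => (hφg v).symm)
    have hlen : (C'.src (φE e)).length = ((C.src e).map φn).length := by
      have hl := congrArg List.length hmaps; simpa using hl
    apply List.ext_getElem hlen
    intro p hp1 hp2
    have hvp : p < (C.src e).length := by simpa using hp2
    have hpt : g'.nodeMap ((C'.src (φE e))[p]) = g'.nodeMap (φn ((C.src e)[p])) := by
      have h1 := congrArg (fun l => l[p]?) hmaps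
      simp only [List.getElem?_map, List.getElem?_eq_getElem, hp1, hvp,
        Option.map_some] at h1
      simpa using h1
    simp only [List.getElem_map]
    set u' := (C'.src (φE e))[p] with hu'
    set v := (C.src e)[p] with hv
    rcases hkey v u' hpt with heq | ⟨k, k', hk, hk', hakk, hkk⟩
    · exact heq
    rcases haa k k' hakk hkk with ⟨x, y, rfl, rfl⟩ | ⟨x, y, rfl, rfl⟩
    · -- u' = c' (inl x) appears as a source in C' : impossible (out-degree 0)
      exfalso
      apply Hyp.not_src_getElem_of_outDegZero (houtC' x) (φE e) p
      rw [← hk]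
      exact List.getElem?_eq_getElem hp1
    · -- φn v = c' (inl x), so v = c (inl x) appears as a source in C : impossible
      exfalso
      have hvr : ∃ z, c z = v := by
        by_contra hvn
        exact hφnot v hvn ⟨Sum.inl x, hk'.symm⟩
      obtain ⟨z, hz⟩ := hvr
      have : c' z = c' (Sum.inl x) := by rw [← hφc z, hz, hk']
      have hzx : z = Sum.inl x := hcinj' this
      apply Hyp.not_src_getElem_of_outDegZero (houtC x) e p
      rw [← hz, hzx] at hv
      rw [hv]
      exact List.getElem?_eq_getElem hvp
  have htgt : ∀ e, C'.tgt (φE e) = (C.tgt e).map φn := by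
    intro e
    have hmaps : (C'.tgt (φE e)).map g'.nodeMap = ((C.tgt e).map φn).map g'.nodeMap := by
      rw [← g'.tgt_eq, hφEg, g.tgt_eq, List.map_map]
      exact List.map_congr_left (fun v _ => (hφg v).symm)
    have hlen : (C'.tgt (φE e)).length = ((C.tgt e).map φn).length := by
      have hl := congrArg List.length hmaps; simpa using hl
    apply List.ext_getElem hlen
    intro p hp1 hp2
    have hvp : p < (C.tgt e).length := by simpa using hp2
    have hpt : g'.nodeMap ((C'.tgt (φE e))[p]) = g'.nodeMap (φn ((C.tgt e)[p])) := by
      have h1 := congrArg (fun l => l[p]?) hmaps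
      simp only [List.getElem?_map, List.getElem?_eq_getElem, hp1, hvp,
        Option.map_some] at h1
      simpa using h1
    simp only [List.getElem_map]
    set u' := (C'.tgt (φE e))[p] with hu'
    set v := (C.tgt e)[p] with hv
    rcases hkey v u' hpt with heq | ⟨k, k', hk, hk', hakk, hkk⟩
    · exact heq
    rcases haa k k' hakk hkk with ⟨x, y, rfl, rfl⟩ | ⟨x, y, rfl, rfl⟩
    · -- φn v = c' (inr y), so v = c (inr y) appears as a target in C : impossible
      exfalso
      have hvr : ∃ z, c z = v := by
        by_contra hvn
        exact hφnot v hvn ⟨Sum.inr y, hk'.symm⟩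
      obtain ⟨z, hz⟩ := hvr
      have : c' z = c' (Sum.inr y) := by rw [← hφc z, hz, hk']
      have hzy : z = Sum.inr y := hcinj' this
      apply Hyp.not_tgt_getElem_of_inDegZero (hinC y) e p
      rw [← hz, hzy] at hv
      rw [hv]
      exact List.getElem?_eq_getElem hvp
    · -- u' = c' (inr y) appears as a target in C' : impossible (in-degree 0)
      exfalso
      apply Hyp.not_tgt_getElem_of_inDegZero (hinC' y) (φE e) p
      rw [← hk]
      exact List.getElem?_eq_getElem hp1
  have hlab : ∀ e, C'.label (φE e) = C.label e := by
    intro e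
    rw [← g'.label_eq, hφEg, g.label_eq]
  -- bijectivity
  have hφn_bij : Function.Bijective φn := by
    constructor
    · intro v w hvw
      by_cases hv : ∃ z, c z = v <;> by_cases hw : ∃ z, c z = w
      · obtain ⟨z, rfl⟩ := hv; obtain ⟨z', rfl⟩ := hw
        rw [hφc, hφc] at hvw
        exact congrArg c (hcinj' hvw)
      · obtain ⟨z, rfl⟩ := hv
        exact absurd ⟨z, (hφc z).symm.trans hvw⟩ (hφnot w hw)
      · obtain ⟨z, rfl⟩ := hw
        exact absurd ⟨z, (hφc z).symm.trans hvw.symm⟩ (hφnot v hv)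
      · have hgvw : g.nodeMap v = g.nodeMap w := by
          rw [← hφg v, ← hφg w, hvw]
        rcases hC v w hgvw with heq | ⟨k, k', hk, -, -⟩
        · exact heq
        · exact absurd ⟨k, hk.symm⟩ hv
    · intro v'
      by_cases hv' : ∃ z, c' z = v'
      · obtain ⟨z, rfl⟩ := hv'
        exact ⟨c z, hφc z⟩
      · -- find a preimage in C of g' v'
        have hnf : ¬∃ x, f.nodeMap x = g'.nodeMap v' := by
          rintro ⟨x, hx⟩
          rcases hD' v' x hx.symm with ⟨k, hk1, -⟩
          exact hv' ⟨k, hk1.symm⟩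
        rcases hVsurj (g'.nodeMap v') with ⟨x, hx⟩ | ⟨v, hv⟩
        · exact absurd ⟨x, hx⟩ hnf
        · have hvnc : ¬∃ z, c z = v := by
            rintro ⟨z, rfl⟩
            exact hnf ⟨a z, (hfa z).trans hv⟩
          refine ⟨v, ?_⟩
          have hgg : g'.nodeMap (φn v) = g'.nodeMap v' := by rw [hφg v, hv]
          rcases hC' (φn v) v' hgg with heq | ⟨k, k', hk, hk', -⟩
          · exact heq
          · exact absurd ⟨k, hk.symm⟩ (hφnot v hvnc)
  have hφE_bij : Function.Bijective φE := by
    constructor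
    · intro e₁ e₂ h12
      apply hgE
      rw [← hφEg e₁, ← hφEg e₂, h12]
    · intro e'
      rcases hEsurj (g'.edgeMap e') with ⟨e₀, he₀⟩ | ⟨e, he⟩
      · exact absurd he₀ (hdisjE' e₀ e')
      · exact ⟨e, hgE' ((hφEg e).trans he)⟩
  refine ⟨⟨φn, φE, hsrc, htgt, hlab⟩, hφn_bij, hφE_bij, hφc, ?_⟩
  apply LHom.ext'
  · funext v; exact hφg v
  · funext e; exact hφEg e

end SDRT
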